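/- Let M be a right R-module with a decomposition M = M₁ ⊕ M₂. If M is a SSP-lifting module satisfying the D2 condition, then M₁ is relatively d-CS-Rickart to M₂. -/

import Mathlib

universe u v w

section Defs

variable {S : Type u} [Ring S]

/-- A submodule `A` is a direct summand of `M`. -/
def IsDirectSummand {M : Type v} [AddCommGroup M] [Module S M] (A : Submodule S M) : Prop :=
  ∃ B : Submodule S M, A ⊓ B = ⊥ ∧ A ⊔ B = ⊤

/-- `A` is an essential submodule of `B`. -/
def IsEssentialIn {M : Type v} [AddCommGroup M] [Module S M] (A B : Submodule S M) : Prop :=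
  A ≤ B ∧ ∀ K : Submodule S M, K ≤ B → K ≠ ⊥ → A ⊓ K ≠ ⊥

/-- `A` is essential in some direct summand of `M`. -/
def EssentialInSummand {M : Type v} [AddCommGroup M] [Module S M] (A : Submodule S M) : Prop :=
  ∃ D : Submodule S M, IsDirectSummand D ∧ IsEssentialIn A D

/-- `A` is a small (superfluous) submodule of `M`. -/
def IsSmallSubmodule {M : Type v} [AddCommGroup M] [Module S M] (A : Submodule S M) : Prop :=
  ∀ K : Submodule S M, A ⊔ K = ⊤ → K = ⊤

/-- `A` lies above the direct summand `D` of `M`, i.e. `D ≤ A` and `A/D` is small in `M/D`. -/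
def LiesAbove {M : Type v} [AddCommGroup M] [Module S M] (A D : Submodule S M) : Prop :=
  IsDirectSummand D ∧ D ≤ A ∧ IsSmallSubmodule (Submodule.map D.mkQ A)

/-- `A` lies above some direct summand of `M`. -/
def LiesAboveSummand {M : Type v} [AddCommGroup M] [Module S M] (A : Submodule S M) : Prop :=
  ∃ D : Submodule S M, LiesAbove A D

end Defs

section ModDefs

variable (S : Type u) [Ring S]

/-- SSP: the sum of any two direct summands is a direct summand. -/
def HasSSP (M : Type v) [AddCommGroup M] [Module S M] : Prop :=
  ∀ A B : Submodule S M, IsDirectSummand A → IsDirectSummand B → IsDirectSummand (A ⊔ B)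

/-- SIP: the intersection of any two direct summands is a direct summand. -/
def HasSIP (M : Type v) [AddCommGroup M] [Module S M] : Prop :=
  ∀ A B : Submodule S M, IsDirectSummand A → IsDirectSummand B → IsDirectSummand (A ⊓ B)

/-- SIP-CS: the intersection of any finite family of direct summands is essential in a
direct summand. -/
def IsSIPCS (M : Type v) [AddCommGroup M] [Module S M] : Prop :=
  ∀ (ι : Type) [Fintype ι] (A : ι → Submodule S M),
    (∀ i, IsDirectSummand (A i)) → EssentialInSummand (⨅ i, A i)

/-- SSP-lifting: if each member of a finite family of submodules lies above a direct summand,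
then their sum lies above a direct summand. -/
def IsSSPLifting (M : Type v) [AddCommGroup M] [Module S M] : Prop :=
  ∀ (ι : Type) [Fintype ι] (A : ι → Submodule S M),
    (∀ i, LiesAboveSummand (A i)) → LiesAboveSummand (⨆ i, A i)

/-- C2 condition: every submodule isomorphic to a direct summand is a direct summand. -/
def HasC2 (M : Type v) [AddCommGroup M] [Module S M] : Prop :=
  ∀ A B : Submodule S M, IsDirectSummand B → Nonempty (A ≃ₗ[S] B) → IsDirectSummand A

/-- C3 condition: the sum of two direct summands with zero intersection is a direct summand. -/
def HasC3 (M : Type v) [AddCommGroup M] [Module S M] : Prop :=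
  ∀ A B : Submodule S M, IsDirectSummand A → IsDirectSummand B → A ⊓ B = ⊥ →
    IsDirectSummand (A ⊔ B)

/-- D2 condition: if `M/A` is isomorphic to a direct summand of `M` then `A` is a direct
summand. -/
def HasD2 (M : Type v) [AddCommGroup M] [Module S M] : Prop :=
  ∀ A : Submodule S M, (∃ B : Submodule S M, IsDirectSummand B ∧
    Nonempty ((M ⧸ A) ≃ₗ[S] B)) → IsDirectSummand A

/-- D3 condition: if two direct summands sum to `M`, their intersection is a direct summand. -/
def IsD3Module (M : Type v) [AddCommGroup M] [Module S M] : Prop :=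
  ∀ A B : Submodule S M, IsDirectSummand A → IsDirectSummand B → A ⊔ B = ⊤ →
    IsDirectSummand (A ⊓ B)

/-- `M` is relatively CS-Rickart to `N`. -/
def RelCSRickart (M : Type v) (N : Type w) [AddCommGroup M] [Module S M]
    [AddCommGroup N] [Module S N] : Prop :=
  ∀ φ : M →ₗ[S] N, EssentialInSummand (LinearMap.ker φ)

/-- `M` is relatively d-CS-Rickart to `N`. -/
def RelDCSRickart (M : Type v) (N : Type w) [AddCommGroup M] [Module S M]
    [AddCommGroup N] [Module S N] : Prop :=
  ∀ φ : N →ₗ[S] M, LiesAboveSummand (LinearMap.range φ)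

/-- CS-Rickart module. -/
def IsCSRickart (M : Type v) [AddCommGroup M] [Module S M] : Prop :=
  RelCSRickart S M M

/-- d-CS-Rickart module. -/
def IsDCSRickart (M : Type v) [AddCommGroup M] [Module S M] : Prop :=
  RelDCSRickart S M M

/-- `M` has an `Ω`-cover, where `Ω` is the class of modules satisfying `P`. -/
def HasCover (P : ModuleCat.{v} S → Prop) (M : Type v) [AddCommGroup M] [Module S M] : Prop :=
  ∃ (E : ModuleCat.{v} S) (g : E →ₗ[S] M), P E ∧
    (∀ (E' : ModuleCat.{v} S), P E' → ∀ g' : E' →ₗ[S] M,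
      ∃ h : E' →ₗ[S] E, g ∘ₗ h = g') ∧
    (∀ h : E →ₗ[S] E, g ∘ₗ h = g → Function.Bijective h)

/-- `M` has an `Ω`-envelope, where `Ω` is the class of modules satisfying `P`. -/
def HasEnvelope (P : ModuleCat.{v} S → Prop) (M : Type v) [AddCommGroup M] [Module S M] : Prop :=
  ∃ (E : ModuleCat.{v} S) (g : M →ₗ[S] E), P E ∧
    (∀ (E' : ModuleCat.{v} S), P E' → ∀ g' : M →ₗ[S] E',
      ∃ h : E →ₗ[S] E', h ∘ₗ g = g') ∧
    (∀ h : E →ₗ[S] E, h ∘ₗ g = g → Function.Bijective h)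

/-- `M` is 2-generated. -/
def TwoGenerated (M : Type v) [AddCommGroup M] [Module S M] : Prop :=
  ∃ a b : M, Submodule.span S ({a, b} : Set M) = ⊤

/-- `M` is finitely cogenerated. -/
def FinitelyCogenerated (M : Type v) [AddCommGroup M] [Module S M] : Prop :=
  ∀ 𝒜 : Set (Submodule S M), sInf 𝒜 = ⊥ →
    ∃ ℬ ⊆ 𝒜, ℬ.Finite ∧ sInf ℬ = ⊥

/-- The socle of `M`: the sum of all simple submodules. -/
def SocleOf (M : Type v) [AddCommGroup M] [Module S M] : Submodule S M :=
  sSup {A : Submodule S M | IsSimpleModule S ↥A}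

/-- An indecomposable module: nonzero, and its only direct summands are `0` and itself. -/
def IsIndecomposable (M : Type v) [AddCommGroup M] [Module S M] : Prop :=
  (⊤ : Submodule S M) ≠ ⊥ ∧
    ∀ A : Submodule S M, IsDirectSummand A → A = ⊥ ∨ A = ⊤

end ModDefs

section RingDefs

variable (R : Type u) [Ring R]

/-- The right annihilator of an element of a right `R`-module, as a right ideal of `R`. -/
def rightAnnihilator {M : Type v} [AddCommGroup M] [Module Rᵐᵒᵖ M] (m : M) :
    Submodule Rᵐᵒᵖ R where
  carrier := {r : R | MulOpposite.op r • m = 0}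
  add_mem' := by
    intro a b ha hb
    simp only [Set.mem_setOf_eq] at *
    rw [MulOpposite.op_add, add_smul, ha, hb, add_zero]
  zero_mem' := by simp
  smul_mem' := by
    intro c x hx
    simp only [Set.mem_setOf_eq] at *
    have : MulOpposite.op (c • x) = c * MulOpposite.op x := by
      rw [MulOpposite.smul_eq_mul_unop]
      simp [MulOpposite.op_mul]
    rw [this, mul_smul, hx, smul_zero]

/-- `M` is a nonsingular right `R`-module. -/
def IsNonsingular (M : Type v) [AddCommGroup M] [Module Rᵐᵒᵖ M] : Prop :=
  ∀ m : M, IsEssentialIn (rightAnnihilator R m) (⊤ : Submodule Rᵐᵒᵖ R) → m = 0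

/-- `R` is a right V-ring: every simple right `R`-module is injective. -/
def IsRightVRing : Prop :=
  ∀ (N : Type u) [AddCommGroup N] [Module Rᵐᵒᵖ N],
    IsSimpleModule Rᵐᵒᵖ N → Module.Injective Rᵐᵒᵖ N

/-- `R` is semiregular: `R/J(R)` is von Neumann regular and idempotents lift modulo `J(R)`. -/
def IsSemiregularRing : Prop :=
  (∀ a : R, ∃ b : R, a - a * b * a ∈ Ideal.jacobson (⊥ : Ideal R) ∧ b = b * a * b) ∧
  (∀ a : R, a * a - a ∈ Ideal.jacobson (⊥ : Ideal R) →
    ∃ e : R, e * e = e ∧ e - a ∈ Ideal.jacobson (⊥ : Ideal R))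

end RingDefs

section AuxProofs12
open Submodule LinearMap

lemma summand_liesAboveSummand {S : Type u} [Ring S] {M : Type v} [AddCommGroup M] [Module S M]
    {X : Submodule S M} (h : IsDirectSummand X) : LiesAboveSummand X := by
  refine ⟨X, h, le_rfl, ?_⟩
  intro K hK
  rwa [Submodule.mkQ_map_self, bot_sup_eq] at hK

lemma aux_main {S : Type u} [Ring S] {M₁ M₂ : Type v}
    [AddCommGroup M₁] [Module S M₁] [AddCommGroup M₂] [Module S M₂]
    (hssp : IsSSPLifting S (M₁ × M₂)) (hd2 : HasD2 S (M₁ × M₂)) :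
    RelDCSRickart S M₁ M₂ := by
  intro φ
  set ι : M₁ →ₗ[S] M₁ × M₂ := LinearMap.inl S M₁ M₂ with hι_def
  set κ : M₂ →ₗ[S] M₁ × M₂ := LinearMap.inr S M₁ M₂ with hκ_def
  have hι : Function.Injective ι := LinearMap.inl_injective
  have hκ : Function.Injective κ := LinearMap.inr_injective
  set P₁ : Submodule S (M₁ × M₂) := LinearMap.range ι with hP₁_def
  set P₂ : Submodule S (M₁ × M₂) := LinearMap.range κ with hP₂_def
  have hP₁P₂ : IsCompl P₁ P₂ := LinearMap.isCompl_range_inl_inr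
  have hmemP₁ : ∀ x : M₁ × M₂, x ∈ P₁ ↔ x.2 = 0 := by
    intro x
    constructor
    · rintro ⟨a, rfl⟩; rfl
    · intro hx; refine ⟨x.1, ?_⟩; rw [hι_def]; ext <;> simp [hx]
  have hmemP₂ : ∀ x : M₁ × M₂, x ∈ P₂ ↔ x.1 = 0 := by
    intro x
    constructor
    · rintro ⟨a, rfl⟩; rfl
    · intro hx; refine ⟨x.2, ?_⟩; rw [hκ_def]; ext <;> simp [hx]
  -- the graph of φ
  set N : Submodule S (M₁ × M₂) := LinearMap.range (LinearMap.prod φ LinearMap.id) with hN_def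
  have hmemN : ∀ x : M₁ × M₂, x ∈ N ↔ x.1 = φ x.2 := by
    intro x
    constructor
    · rintro ⟨b, rfl⟩; rfl
    · intro hx; exact ⟨x.2, by ext <;> simp [hx.symm]⟩
  have hNsum : IsDirectSummand N := by
    refine ⟨P₁, ?_, ?_⟩
    · rw [eq_bot_iff]; rintro x ⟨hxN, hxP⟩
      have h2 : x.2 = 0 := (hmemP₁ x).mp hxP
      have h1 : x.1 = 0 := by rw [(hmemN x).mp hxN, h2, map_zero]
      simp [Submodule.mem_bot]; ext <;> assumption
    · rw [eq_top_iff]; rintro x -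
      refine mem_sup.mpr ⟨(φ x.2, x.2), (hmemN _).mpr rfl, (x.1 - φ x.2, 0), (hmemP₁ _).mpr rfl, ?_⟩
      ext <;> simp
  have hP₂sum : IsDirectSummand P₂ := ⟨P₁, by rw [inf_comm]; exact hP₁P₂.disjoint.eq_bot,
    by rw [sup_comm]; exact hP₁P₂.codisjoint.eq_top⟩
  -- A₀ = range φ × M₂
  set A₀ : Submodule S (M₁ × M₂) := (LinearMap.range φ).prod ⊤ with hA₀_def
  have hmemA₀ : ∀ x : M₁ × M₂, x ∈ A₀ ↔ x.1 ∈ LinearMap.range φ := by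
    intro x; rw [hA₀_def, Submodule.mem_prod]; simp
  have hNA₀ : N ≤ A₀ := by
    intro x hx; rw [hmemA₀]; exact ⟨x.2, ((hmemN x).mp hx).symm⟩
  have hP₂A₀ : P₂ ≤ A₀ := by
    intro x hx; rw [hmemA₀, (hmemP₂ x).mp hx]; exact zero_mem _
  have hsupNP₂ : N ⊔ P₂ = A₀ := by
    refine le_antisymm (sup_le hNA₀ hP₂A₀) ?_
    intro x hx
    obtain ⟨b, hb⟩ := (hmemA₀ x).mp hx
    refine mem_sup.mpr ⟨(φ b, b), (hmemN _).mpr rfl, (0, x.2 - b), (hmemP₂ _).mpr rfl, ?_⟩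
    ext <;> simp [hb]
  -- SSP-lifting applied to {N, P₂}
  have hA₀lies : LiesAboveSummand A₀ := by
    have h := hssp Bool (fun b => if b then N else P₂) (by
      intro b; cases b
      · exact summand_liesAboveSummand hP₂sum
      · exact summand_liesAboveSummand hNsum)
    rw [iSup_bool_eq] at h
    rwa [show (if true then N else P₂) = N from rfl,
      show (if false then N else P₂) = P₂ from rfl, hsupNP₂] at h
  obtain ⟨D, ⟨W, hDW₁, hDW₂⟩, hDA₀, hsmall⟩ := hA₀lies
  -- consequence of smallness
  have hsmall_use : ∀ X : Submodule S (M₁ × M₂), D ≤ X → A₀ ⊔ X = ⊤ → X = ⊤ := by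
    intro X hDX hAX
    have h1 : Submodule.map D.mkQ A₀ ⊔ Submodule.map D.mkQ X = ⊤ := by
      rw [← Submodule.map_sup, hAX, Submodule.map_top, Submodule.range_mkQ]
    have h2 := hsmall _ h1
    have h3 := congrArg (Submodule.comap D.mkQ) h2
    rw [Submodule.comap_map_mkQ, Submodule.comap_top, sup_eq_right.mpr hDX] at h3
    exact h3
  have hA₀P₁ : A₀ ⊔ P₁ = ⊤ := by
    rw [eq_top_iff]; rintro x -
    refine mem_sup.mpr ⟨(0, x.2), ?_, (x.1, 0), (hmemP₁ _).mpr rfl, by ext <;> simp⟩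
    rw [hmemA₀]; exact zero_mem _
  have hDP₁ : D ⊔ P₁ = ⊤ := by
    refine hsmall_use _ le_sup_left ?_
    rw [← sup_assoc, sup_comm A₀ D, sup_eq_right.mpr hDA₀, hA₀P₁]
  -- projection onto D along W
  have hcompl : IsCompl D W := ⟨disjoint_iff.mpr hDW₁, codisjoint_iff.mpr hDW₂⟩
  set pr : (M₁ × M₂) →ₗ[S] (M₁ × M₂) := D.subtype ∘ₗ (D.linearProjOfIsCompl W hcompl)
    with hpr_def
  have hprD : ∀ m, pr m ∈ D := fun m => (D.linearProjOfIsCompl W hcompl m).2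
  have hpr_left : ∀ x ∈ D, pr x = x := by
    intro x hx
    have h := Submodule.linearProjOfIsCompl_apply_left hcompl ⟨x, hx⟩
    have h2 : pr x = ((D.linearProjOfIsCompl W hcompl) x : M₁ × M₂) := rfl
    rw [h2]
    exact congrArg Subtype.val h
  have hpr_right : ∀ x ∈ W, pr x = 0 := by
    intro x hx
    have h := Submodule.linearProjOfIsCompl_apply_right hcompl ⟨x, hx⟩
    have h2 : pr x = ((D.linearProjOfIsCompl W hcompl) x : M₁ × M₂) := rfl
    rw [h2]
    exact congrArg Subtype.val h
  have hpr_projpr : ∀ m, D.linearProjOfIsCompl W hcompl (pr m)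
      = D.linearProjOfIsCompl W hcompl m := by
    intro m
    exact Submodule.linearProjOfIsCompl_apply_left hcompl (D.linearProjOfIsCompl W hcompl m)
  have hpr_sub : ∀ m, m - pr m ∈ W := by
    intro m
    have hk : m - pr m ∈ LinearMap.ker (D.linearProjOfIsCompl W hcompl) := by
      rw [LinearMap.mem_ker, map_sub, hpr_projpr m, sub_self]
    rwa [show LinearMap.ker (D.linearProjOfIsCompl W hcompl) = W from
      Submodule.ker_projectionOnto hcompl] at hk
  -- ψ : M → M₂ with kernel (D ⊓ P₁) ⊔ W
  set ψ : (M₁ × M₂) →ₗ[S] M₂ := (LinearMap.snd S M₁ M₂) ∘ₗ pr with hψ_def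
  have hψsurj : Function.Surjective ψ := by
    intro b
    have : ((0 : M₁), b) ∈ D ⊔ P₁ := by rw [hDP₁]; trivial
    obtain ⟨d, hd, p, hp, hdp⟩ := mem_sup.mp this
    refine ⟨d, ?_⟩
    have h2 : d.2 = b := by
      have := congrArg Prod.snd hdp
      simpa [(hmemP₁ p).mp hp] using this
    rw [hψ_def]; simp only [LinearMap.comp_apply, LinearMap.snd_apply]
    rw [hpr_left d hd, h2]
  have hker : LinearMap.ker ψ = (D ⊓ P₁) ⊔ W := by
    ext m
    rw [LinearMap.mem_ker, hψ_def]
    simp only [LinearMap.comp_apply, LinearMap.snd_apply]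
    constructor
    · intro hm
      refine mem_sup.mpr ⟨pr m, ⟨hprD m, (hmemP₁ _).mpr hm⟩, m - pr m, hpr_sub m, by abel⟩
    · intro hm
      obtain ⟨x, hx, w, hw, hxw⟩ := mem_sup.mp hm
      rw [← hxw, map_add, hpr_left x hx.1, hpr_right w hw, add_zero]
      exact (hmemP₁ x).mp hx.2
  -- D2 gives that (D ⊓ P₁) ⊔ W is a direct summand
  have hKsummand : IsDirectSummand ((D ⊓ P₁) ⊔ W) := by
    refine hd2 _ ⟨P₂, hP₂sum, ⟨?_⟩⟩
    exact (Submodule.quotEquivOfEq _ _ hker.symm).trans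
      ((ψ.quotKerEquivOfSurjective hψsurj).trans (LinearEquiv.ofInjective κ hκ))
  obtain ⟨V, hKV₁, hKV₂⟩ := hKsummand
  set D₁ : Submodule S (M₁ × M₂) := D ⊓ P₁ with hD₁_def
  have hD₁W : D₁ ⊓ W = ⊥ := by
    rw [eq_bot_iff, ← hDW₁]
    exact inf_le_inf_right W inf_le_left
  have hKWV : (D₁ ⊔ W) ⊓ (W ⊔ V) = W := by
    rw [inf_comm, sup_inf_assoc_of_le V (le_sup_right : W ≤ D₁ ⊔ W), inf_comm V, hKV₁,
      sup_bot_eq]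
  have hD₁WV : D₁ ⊓ (W ⊔ V) = ⊥ := by
    rw [eq_bot_iff, ← hD₁W]
    refine le_inf inf_le_left ?_
    calc D₁ ⊓ (W ⊔ V) ≤ (D₁ ⊔ W) ⊓ (W ⊔ V) := inf_le_inf_right _ le_sup_left
      _ = W := hKWV
  have hD₁WVtop : D₁ ⊔ (W ⊔ V) = ⊤ := by rw [← sup_assoc]; exact hKV₂
  -- descend to M₁
  set D₁' : Submodule S M₁ := Submodule.comap ι D with hD₁'_def
  have hmemD₁' : ∀ a : M₁, a ∈ D₁' ↔ ι a ∈ D := fun a => Iff.rfl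
  have hmapD₁' : ∀ a : M₁, ι a ∈ D₁ ↔ a ∈ D₁' := by
    intro a
    constructor
    · intro h; exact h.1
    · intro h; exact ⟨h, ⟨a, rfl⟩⟩
  set C₁ : Submodule S M₁ := Submodule.comap ι (W ⊔ V) with hC₁_def
  have hD₁'C₁_bot : D₁' ⊓ C₁ = ⊥ := by
    rw [eq_bot_iff]
    rintro a ⟨h1, h2⟩
    have : ι a ∈ D₁ ⊓ (W ⊔ V) := ⟨(hmapD₁' a).mpr h1, h2⟩
    rw [hD₁WV, Submodule.mem_bot] at this
    have := hι (by rw [this, map_zero] : ι a = ι 0)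
    simp [this]
  have hD₁'C₁_top : D₁' ⊔ C₁ = ⊤ := by
    rw [eq_top_iff]; rintro a -
    have : ι a ∈ D₁ ⊔ (W ⊔ V) := by rw [hD₁WVtop]; trivial
    obtain ⟨x, hx, y, hy, hxy⟩ := mem_sup.mp this
    obtain ⟨d, hd⟩ := hx.2
    have hdD₁' : d ∈ D₁' := by rw [hmemD₁', hd]; exact hx.1
    have hy' : y = ι (a - d) := by rw [map_sub, hd, ← hxy]; abel
    refine mem_sup.mpr ⟨d, hdD₁', a - d, ?_, by abel⟩
    rw [hC₁_def, Submodule.mem_comap, ← hy']; exact hy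
  have hD₁'le : D₁' ≤ LinearMap.range φ := by
    intro a ha
    have : ι a ∈ A₀ := hDA₀ ((hmemD₁' a).mp ha)
    rw [hmemA₀] at this
    exact this
  -- smallness of (range φ)/D₁' in M₁/D₁'
  refine ⟨D₁', ⟨C₁, hD₁'C₁_bot, hD₁'C₁_top⟩, hD₁'le, ?_⟩
  intro Q hQ
  set K₀ : Submodule S M₁ := Submodule.comap D₁'.mkQ Q with hK₀_def
  have hD₁'K₀ : D₁' ≤ K₀ := by
    intro x hx
    rw [hK₀_def, Submodule.mem_comap, Submodule.mkQ_apply,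
      (Submodule.Quotient.mk_eq_zero D₁').mpr hx]
    exact zero_mem _
  have hmapK₀ : Submodule.map D₁'.mkQ K₀ = Q :=
    Submodule.map_comap_eq_of_surjective (Submodule.mkQ_surjective D₁') Q
  have h1 : LinearMap.range φ ⊔ K₀ = ⊤ := by
    have ht : Submodule.map D₁'.mkQ (LinearMap.range φ ⊔ K₀) = ⊤ := by
      rw [Submodule.map_sup, hmapK₀, hQ]
    have := congrArg (Submodule.comap D₁'.mkQ) ht
    rw [Submodule.comap_map_mkQ, Submodule.comap_top,
      sup_eq_right.mpr (le_trans hD₁'K₀ le_sup_right)] at this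
    exact this
  have h2 : A₀ ⊔ (D ⊔ Submodule.map ι K₀) = ⊤ := by
    rw [eq_top_iff]; rintro x -
    have hx1 : x.1 ∈ LinearMap.range φ ⊔ K₀ := by rw [h1]; trivial
    obtain ⟨r, hr, k, hk, hrk⟩ := mem_sup.mp hx1
    refine mem_sup.mpr ⟨(r, x.2), (hmemA₀ _).mpr hr, ι k, ?_, ?_⟩
    · exact Submodule.mem_sup_right (Submodule.mem_map_of_mem hk)
    · rw [hι_def]; ext <;> simp [hrk]
  have h3 : D ⊔ Submodule.map ι K₀ = ⊤ := hsmall_use _ le_sup_left h2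
  have h4 : K₀ = ⊤ := by
    rw [eq_top_iff]; rintro a -
    have : ι a ∈ D ⊔ Submodule.map ι K₀ := by rw [h3]; trivial
    obtain ⟨x, hx, y, hy, hxy⟩ := mem_sup.mp this
    obtain ⟨k, hkK₀, hky⟩ := hy
    have hxval : x = ι (a - k) := by rw [map_sub, hky, ← hxy]; abel
    have : a - k ∈ D₁' := by rw [hmemD₁', ← hxval]; exact hx
    have hk' : a - k ∈ K₀ := hD₁'K₀ this
    have := add_mem hk' hkK₀
    simpa using this
  rw [← hmapK₀, h4, Submodule.map_top, Submodule.range_mkQ]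

end AuxProofs12

/-- if `M = M₁ ⊕ M₂` is a SSP-lifting module with the D2 condition, then `M₁` is
relatively d-CS-Rickart to `M₂`. -/
theorem statement_12 (R : Type u) [Ring R] (M₁ : Type v) (M₂ : Type v)
    [AddCommGroup M₁] [Module Rᵐᵒᵖ M₁] [AddCommGroup M₂] [Module Rᵐᵒᵖ M₂]
    (hssp : IsSSPLifting Rᵐᵒᵖ (M₁ × M₂)) (hd2 : HasD2 Rᵐᵒᵖ (M₁ × M₂)) :
    RelDCSRickart Rᵐᵒᵖ M₁ M₂ := by
  exact aux_main hssp hd2
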